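/- Let S(k_R, k_M) = F_M(k_R, k_M) - F_R(k_R) with F_M, F_R as in the mean-field migration model with parameters β, c > 0. Then the selection gradient g(k_R) = ∂S/∂k_M evaluated at k_M = k_R equals -exp[-G(k_R,k_R)] · ( k_R(1-k_R)(1 + β²(k_R - 1)) / (2(2k_R² - 2k_R + 1)²) + 2 c k_R ), where G(k_R,k_M) = (k_M² + (1-k_M)²β²(1-k_R))/(4(2k_M² - 2k_M + 1)) + c k_M². -/

import Mathlib

/-- The selection gradient of the mean-field migration model: with
`G(k_R,k_M) = (k_M² + (1-k_M)²β²(1-k_R))/(4(2k_M² - 2k_M + 1)) + c k_M²`,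
`S(k_R,k_M) = exp(-G(k_R,k_M)) - exp(-G(k_R,k_R))`, the derivative of
`k_M ↦ S(k_R,k_M)` at `k_M = k_R` equals
`-exp(-G(k_R,k_R)) · ( k_R(1-k_R)(1+β²(k_R-1))/(2(2k_R²-2k_R+1)²) + 2ck_R )`. -/
theorem selection_gradient_formula
    (β c : ℝ) (hβ : 0 < β) (hc : 0 < c)
    (G : ℝ → ℝ → ℝ)
    (hG : ∀ kR kM, G kR kM =
      (kM ^ 2 + (1 - kM) ^ 2 * β ^ 2 * (1 - kR)) / (4 * (2 * kM ^ 2 - 2 * kM + 1))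
        + c * kM ^ 2)
    (S : ℝ → ℝ → ℝ)
    (hS : ∀ kR kM, S kR kM = Real.exp (-G kR kM) - Real.exp (-G kR kR)) :
    ∀ kR : ℝ, HasDerivAt (fun kM => S kR kM)
      (-Real.exp (-G kR kR) *
        (kR * (1 - kR) * (1 + β ^ 2 * (kR - 1))
            / (2 * (2 * kR ^ 2 - 2 * kR + 1) ^ 2)
          + 2 * c * kR)) kR := by
  intro kR
  have hq : (2 * kR ^ 2 - 2 * kR + 1) ≠ 0 := by nlinarith [sq_nonneg (2 * kR - 1)]
  have hD : (4 * (2 * kR ^ 2 - 2 * kR + 1)) ≠ 0 := by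
    intro h; apply hq; linarith
  have hx2 : HasDerivAt (fun x : ℝ => x ^ 2) (2 * kR) kR := by
    simpa using hasDerivAt_pow 2 kR
  have hN : HasDerivAt (fun x : ℝ => x ^ 2 + (1 - x) ^ 2 * β ^ 2 * (1 - kR))
      (2 * kR + (2 * (1 - kR) * (-1)) * (β ^ 2 * (1 - kR))) kR := by
    have h1 : HasDerivAt (fun x : ℝ => (1 - x) ^ 2) (2 * (1 - kR) ^ 1 * (-1)) kR := by
      have := ((hasDerivAt_id kR).const_sub 1).fun_pow 2
      simpa using this
    have := hx2.fun_add ((h1.mul_const (β ^ 2)).mul_const (1 - kR))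
    exact this.congr_deriv (by ring)
  have hDder : HasDerivAt (fun x : ℝ => 4 * (2 * x ^ 2 - 2 * x + 1))
      (4 * (2 * (2 * kR) - 2)) kR := by
    have h1 : HasDerivAt (fun x : ℝ => 2 * x ^ 2 - 2 * x + 1)
        (2 * (2 * kR) - 2) kR := by
      have := ((hx2.const_mul 2).sub ((hasDerivAt_id kR).const_mul 2)).add_const 1
      simpa using this
    simpa using h1.const_mul 4
  have hGder : HasDerivAt (fun x : ℝ => (x ^ 2 + (1 - x) ^ 2 * β ^ 2 * (1 - kR)) /
      (4 * (2 * x ^ 2 - 2 * x + 1)) + c * x ^ 2)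
      (((2 * kR + (2 * (1 - kR) * (-1)) * (β ^ 2 * (1 - kR))) *
          (4 * (2 * kR ^ 2 - 2 * kR + 1)) -
        (kR ^ 2 + (1 - kR) ^ 2 * β ^ 2 * (1 - kR)) * (4 * (2 * (2 * kR) - 2))) /
        (4 * (2 * kR ^ 2 - 2 * kR + 1)) ^ 2 + c * (2 * kR)) kR := by
    exact (hN.div hDder hD).add (hx2.const_mul c)
  have hexp : HasDerivAt (fun x : ℝ => Real.exp (-((x ^ 2 + (1 - x) ^ 2 * β ^ 2 * (1 - kR)) /
      (4 * (2 * x ^ 2 - 2 * x + 1)) + c * x ^ 2)) - Real.exp (-G kR kR))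
      (Real.exp (-((kR ^ 2 + (1 - kR) ^ 2 * β ^ 2 * (1 - kR)) /
        (4 * (2 * kR ^ 2 - 2 * kR + 1)) + c * kR ^ 2)) *
        (-(((2 * kR + (2 * (1 - kR) * (-1)) * (β ^ 2 * (1 - kR))) *
            (4 * (2 * kR ^ 2 - 2 * kR + 1)) -
          (kR ^ 2 + (1 - kR) ^ 2 * β ^ 2 * (1 - kR)) * (4 * (2 * (2 * kR) - 2))) /
          (4 * (2 * kR ^ 2 - 2 * kR + 1)) ^ 2 + c * (2 * kR)))) kR :=
    (hGder.neg.exp).sub_const _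
  have hfun : (fun kM => S kR kM) = fun x : ℝ =>
      Real.exp (-((x ^ 2 + (1 - x) ^ 2 * β ^ 2 * (1 - kR)) /
        (4 * (2 * x ^ 2 - 2 * x + 1)) + c * x ^ 2)) - Real.exp (-G kR kR) := by
    funext x; rw [hS, hG]
  rw [hfun]
  convert hexp using 1
  rw [hG]
  have hq2 : (2 * kR ^ 2 - 2 * kR + 1) ^ 2 ≠ 0 := pow_ne_zero _ hq
  field_simp
  ring
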